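/- arXiv:2203.12158 — 2 statements merged into one kernel-verified Lean document; each statement's English description precedes it below -/
import Mathlib

section
/- Let G be a group acting transitively on a set X and let x ∈ X. Then the stabilizer G_x is not properly contained in any of its conjugates (i.e., for all g ∈ G, G_x ⊆ gG_xg^{-1} implies G_x = gG_xg^{-1}) if and only if every G-equivariant transformation of X is bijective, i.e., End_G(X) = Aut_G(X). -/
/-- The monoid of all `G`-equivariant transformations of `X`, as a submonoid of
`Function.End X` (composition of functions). -/
def gEnd (G X : Type*) [Group G] [MulAction G X] : Submonoid (Function.End X) where
  carrier := {f | ∀ (g : G) (x : X), f (g • x) = g • f x}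
  one_mem' := fun _ _ => rfl
  mul_mem' := fun {f₁ f₂} h₁ h₂ g x => by
    show f₁ (f₂ (g • x)) = g • f₁ (f₂ x)
    rw [h₂, h₁]

/-- The group of all bijective `G`-equivariant transformations of `X`, as a subgroup of
`Equiv.Perm X`. -/
def gAut (G X : Type*) [Group G] [MulAction G X] : Subgroup (Equiv.Perm X) where
  carrier := {f | ∀ (g : G) (x : X), f (g • x) = g • f x}
  one_mem' := fun _ _ => rfl
  mul_mem' := fun {f₁ f₂} h₁ h₂ g x => by
    show f₁ (f₂ (g • x)) = g • f₁ (f₂ x)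
    rw [h₂, h₁]
  inv_mem' := fun {f} hf g x => f.injective (by
    rw [Equiv.Perm.coe_inv, Equiv.apply_symm_apply, hf, Equiv.apply_symm_apply])

/-- The conjugate subgroup `g K g⁻¹`. -/
def conjSub {G : Type*} [Group G] (g : G) (K : Subgroup G) : Subgroup G :=
  Subgroup.map (MulAut.conj g).toMonoidHom K

open MulAction in
private noncomputable def emap (G : Type*) {X : Type*} [Group G] [MulAction G X]
    [IsPretransitive G X] (x y : X) : X → X :=
  fun z => (Classical.choose (exists_smul_eq G x z)) • y

open MulAction in
private lemma emap_spec {G X : Type*} [Group G] [MulAction G X] [IsPretransitive G X]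
    {x y : X} (hle : stabilizer G x ≤ stabilizer G y) (h : G) :
    emap G x y (h • x) = h • y := by
  have hc := Classical.choose_spec (exists_smul_eq G x (h • x))
  set c := Classical.choose (exists_smul_eq G x (h • x)) with hcdef
  have hs : h⁻¹ * c ∈ stabilizer G x := by
    rw [mem_stabilizer_iff, mul_smul, hc, inv_smul_smul]
  have := hle hs
  rw [mem_stabilizer_iff, mul_smul] at this
  show c • y = h • y
  calc c • y = h • (h⁻¹ • (c • y)) := by rw [smul_inv_smul]
    _ = h • y := by rw [this]

open MulAction in
private lemma conjSub_stab {G X : Type*} [Group G] [MulAction G X] (g : G) (x : X) :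
    conjSub g (stabilizer G x) = stabilizer G (g • x) :=
  (stabilizer_smul_eq_stabilizer_map_conj g x).symm

open MulAction in
/-- For a transitive action, `G_x` is not properly contained in any of
its conjugates iff every `G`-equivariant transformation of `X` is bijective. -/
theorem stmt5 {G X : Type*} [Group G] [MulAction G X] [MulAction.IsPretransitive G X]
    (x : X) :
    (∀ g : G, MulAction.stabilizer G x ≤ conjSub g (MulAction.stabilizer G x) →
        MulAction.stabilizer G x = conjSub g (MulAction.stabilizer G x)) ↔
      ∀ τ ∈ gEnd G X, Function.Bijective τ := by
  constructor
  · intro H τ hτ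
    set y := τ x with hy
    obtain ⟨a, ha⟩ := exists_smul_eq G x y
    have hle : stabilizer G x ≤ stabilizer G y := by
      intro s hs
      rw [mem_stabilizer_iff]
      calc s • y = τ (s • x) := (hτ s x).symm
        _ = y := by rw [hs]
    have heq : stabilizer G x = stabilizer G y := by
      rw [← ha] at hle ⊢
      rw [← conjSub_stab a x] at hle ⊢
      exact H a hle
    have hle' : stabilizer G y ≤ stabilizer G x := heq.ge
    have hτval : ∀ h : G, τ (h • x) = h • y := fun h => hτ h x
    constructor
    · -- injective via left inverse emap G y x
      intro z₁ z₂ hz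
      obtain ⟨h₁, h₁x⟩ := exists_smul_eq G x z₁
      obtain ⟨h₂, h₂x⟩ := exists_smul_eq G x z₂
      rw [← h₁x, ← h₂x, hτval, hτval] at hz
      have := congrArg (emap G y x) hz
      rw [emap_spec hle', emap_spec hle'] at this
      rw [← h₁x, ← h₂x, this]
    · intro z
      obtain ⟨h, hh⟩ := exists_smul_eq G y z
      exact ⟨h • x, by rw [hτval, hh]⟩
  · intro H g hle
    rw [conjSub_stab] at hle ⊢
    have hmem : emap G x (g • x) ∈ gEnd G X := by
      intro k z
      obtain ⟨h, hh⟩ := exists_smul_eq G x z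
      rw [← hh, ← mul_smul, emap_spec hle, emap_spec hle, mul_smul]
    have hbij := H _ hmem
    have hval : ∀ h : G, emap G x (g • x) (h • x) = h • (g • x) := fun h => emap_spec hle h
    refine le_antisymm hle ?_
    intro s hs
    rw [mem_stabilizer_iff] at hs ⊢
    apply hbij.1
    have h1 : emap G x (g • x) x = g • x := by
      have := hval 1; rwa [one_smul, one_smul] at this
    calc emap G x (g • x) (s • x) = s • (g • x) := hval s
      _ = g • x := hs
      _ = emap G x (g • x) x := h1.symm
end

section
/- Let G be a finite group acting on a finite set X, and let [H_1], …, [H_r] be the distinct conjugacy classes of point stabilizers. For each i let N_i = N_G(H_i), U(H_i) = {[G_x]_{N_i} : x ∈ X, H_i ≤ G_x} (the set of N_i-conjugacy classes of point stabilizers containing H_i), and let κ_G(X) be the number of indices i such that there is exactly one G-orbit whose point stabilizer is conjugate to H_i. Then the relative rank of End_G(X) modulo Aut_G(X) is at most Σ_{i=1}^r |U(H_i)| − κ_G(X). -/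
/-- The `N`-conjugacy class `[K]_N = {gKg⁻¹ : g ∈ N}` of a subgroup `K`. -/
def nConjClass {G : Type*} [Group G] (N K : Subgroup G) : Set (Subgroup G) :=
  {L | ∃ n ∈ N, L = conjSub n K}

/-- The set `O_[H]` of `G`-orbits of `X` whose point stabilizers are conjugate to `H`. -/
def classOrbits (G X : Type*) [Group G] [MulAction G X] (H : Subgroup G) : Set (Set X) :=
  {s | ∃ y : X, (∃ g : G, MulAction.stabilizer G y = conjSub g H) ∧ s = MulAction.orbit G y}

/-- The set `U(H)` of `N_G(H)`-conjugacy classes of point stabilizers of `X` containing `H`. -/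
def stabU (G X : Type*) [Group G] [MulAction G X] (H : Subgroup G) : Set (Set (Subgroup G)) :=
  {C | ∃ x : X, H ≤ MulAction.stabilizer G x ∧
    C = nConjClass (Subgroup.normalizer (H : Set G)) (MulAction.stabilizer G x)}

/-- The elements of `Aut_G(X)` viewed as a set of transformations of `X`. -/
def autSet (G X : Type*) [Group G] [MulAction G X] : Set (Function.End X) :=
  (fun e : Equiv.Perm X => (e : X → X)) '' (gAut G X)

/-- The relative rank `Rank(T : N)` of a submonoid `T` modulo a set `N`: the least
cardinality of a set `W` with `⟨W ∪ N⟩ = T`. -/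
noncomputable def relRank {M : Type*} [Monoid M] (T : Submonoid M) (N : Set M) : ℕ :=
  sInf {n : ℕ | ∃ W : Finset M, W.card = n ∧ Submonoid.closure (↑W ∪ N) = T}

section Infra
open MulAction Function

variable {G X : Type*} [Group G] [MulAction G X]

lemma mem_conjSub {g x : G} {K : Subgroup G} : x ∈ conjSub g K ↔ g⁻¹ * x * g ∈ K := by
  simp only [conjSub, Subgroup.mem_map, MulEquiv.coe_toMonoidHom, MulAut.conj_apply]
  constructor
  · rintro ⟨k, hk, rfl⟩
    have : g⁻¹ * (g * k * g⁻¹) * g = k := by group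
    rw [this]; exact hk
  · intro h
    exact ⟨g⁻¹ * x * g, h, by group⟩

lemma conjSub_one (K : Subgroup G) : conjSub 1 K = K := by
  ext x; simp [mem_conjSub]

lemma conjSub_conjSub (g h : G) (K : Subgroup G) :
    conjSub g (conjSub h K) = conjSub (g * h) K := by
  ext x
  simp only [mem_conjSub, mul_inv_rev]
  have e : h⁻¹ * (g⁻¹ * x * g) * h = h⁻¹ * g⁻¹ * x * (g * h) := by group
  rw [e]

lemma stab_smul (g : G) (x : X) :
    MulAction.stabilizer G (g • x) = conjSub g (MulAction.stabilizer G x) :=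
  MulAction.stabilizer_smul_eq_stabilizer_map_conj g x

lemma conjSub_eq_self_of_mem_normalizer {n : G} {K : Subgroup G}
    (hn : n ∈ Subgroup.normalizer (K : Set G)) : conjSub n K = K := by
  ext x
  rw [mem_conjSub]
  rw [Subgroup.mem_normalizer_iff] at hn
  have h2 := hn (n⁻¹ * x * n)
  have h3 : n * (n⁻¹ * x * n) * n⁻¹ = x := by group
  rw [h3] at h2
  exact h2

lemma stab_le_stab_apply {f : Function.End X} (hf : f ∈ gEnd G X) (x : X) :
    MulAction.stabilizer G x ≤ MulAction.stabilizer G (f x) := by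
  intro g hg
  rw [MulAction.mem_stabilizer_iff] at hg ⊢
  rw [← hf g x, hg]

lemma stab_apply_of_bij {f : Function.End X} (hf : f ∈ gEnd G X)
    (hb : Function.Bijective f) (x : X) :
    MulAction.stabilizer G (f x) = MulAction.stabilizer G x := by
  ext g
  simp only [MulAction.mem_stabilizer_iff]
  rw [← hf g x]
  exact ⟨fun h => hb.1 h, fun h => by rw [h]⟩

open Classical in
/-- well-definedness of orbit maps -/
lemma omap_welldef {y q : X} (hle : MulAction.stabilizer G y ≤ MulAction.stabilizer G q)
    {g g' : G} (h : g • y = g' • y) : g • q = g' • q := by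
  have h1 : g'⁻¹ * g ∈ MulAction.stabilizer G y := by
    rw [MulAction.mem_stabilizer_iff, mul_smul, h, inv_smul_smul]
  have h2 := hle h1
  rw [MulAction.mem_stabilizer_iff] at h2
  have : g' • (g'⁻¹ * g) • q = g' • q := by rw [h2]
  rwa [← mul_smul, mul_inv_cancel_left] at this

open Classical in
noncomputable def omap (G : Type*) {X : Type*} [Group G] [MulAction G X] (y q : X) :
    Function.End X :=
  fun x => if h : x ∈ MulAction.orbit G y then (Classical.choose (MulAction.mem_orbit_iff.mp h)) • q else x

lemma omap_apply_not_mem {y q x : X} (h : x ∉ MulAction.orbit G y) : omap G y q x = x := by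
  rw [omap]; exact dif_neg h

lemma omap_apply_smul {y q : X} (hle : MulAction.stabilizer G y ≤ MulAction.stabilizer G q)
    (g : G) : omap G y q (g • y) = g • q := by
  have h : g • y ∈ MulAction.orbit G y := MulAction.mem_orbit _ _
  have : omap G y q (g • y) = (Classical.choose (MulAction.mem_orbit_iff.mp h)) • q := by
    rw [omap]; exact dif_pos h
  rw [this]
  exact omap_welldef hle (Classical.choose_spec (MulAction.mem_orbit_iff.mp h))

lemma omap_apply_self {y q : X} (hle : MulAction.stabilizer G y ≤ MulAction.stabilizer G q) :
    omap G y q y = q := by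
  have := omap_apply_smul (G := G) (X := X) hle 1
  simpa using this

lemma omap_mem_gEnd {y q : X} (hle : MulAction.stabilizer G y ≤ MulAction.stabilizer G q) :
    omap G y q ∈ gEnd G X := by
  intro g x
  by_cases h : x ∈ MulAction.orbit G y
  · obtain ⟨c, rfl⟩ := MulAction.mem_orbit_iff.mp h
    rw [← mul_smul, omap_apply_smul hle, omap_apply_smul hle, mul_smul]
  · have h2 : g • x ∉ MulAction.orbit G y := by
      intro hc
      obtain ⟨c, hc⟩ := MulAction.mem_orbit_iff.mp hc
      exact h (MulAction.mem_orbit_iff.mpr ⟨g⁻¹ * c, by rw [mul_smul, hc, inv_smul_smul]⟩)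
    rw [omap_apply_not_mem h, omap_apply_not_mem h2]

lemma smul_mem_orbit_iff' {y x : X} (g : G) : g • x ∈ MulAction.orbit G y ↔ x ∈ MulAction.orbit G y := by
  constructor
  · intro hc
    obtain ⟨c, hc⟩ := MulAction.mem_orbit_iff.mp hc
    exact MulAction.mem_orbit_iff.mpr ⟨g⁻¹ * c, by rw [mul_smul, hc, inv_smul_smul]⟩
  · intro hc
    obtain ⟨c, rfl⟩ := MulAction.mem_orbit_iff.mp hc
    exact MulAction.mem_orbit_iff.mpr ⟨g * c, by rw [mul_smul]⟩

lemma orbit_eq_of_mem {x y : X} (h : x ∈ MulAction.orbit G y) :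
    MulAction.orbit G x = MulAction.orbit G y := MulAction.orbit_eq_iff.mpr h

lemma conjSub_le_conjSub {K L : Subgroup G} (g : G) (h : K ≤ L) :
    conjSub g K ≤ conjSub g L := Subgroup.map_mono h

lemma omap_rebase {y q : X} (c : G) (hle : MulAction.stabilizer G y ≤ MulAction.stabilizer G q) :
    omap G y q = omap G (c • y) (c • q) := by
  have hle2 : MulAction.stabilizer G (c • y) ≤ MulAction.stabilizer G (c • q) := by
    rw [stab_smul, stab_smul]; exact conjSub_le_conjSub c hle
  funext x
  by_cases h : x ∈ MulAction.orbit G y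
  · obtain ⟨g, rfl⟩ := MulAction.mem_orbit_iff.mp h
    have e1 : g • y = (g * c⁻¹) • (c • y) := by rw [mul_smul, inv_smul_smul]
    rw [omap_apply_smul hle, e1, omap_apply_smul hle2, smul_smul, inv_mul_cancel_right]
  · have h2 : x ∉ MulAction.orbit G (c • y) := by rwa [MulAction.orbit_smul]
    rw [omap_apply_not_mem h, omap_apply_not_mem h2]

variable [Finite X]

lemma exists_mover (u v : X) (hst : MulAction.stabilizer G u = MulAction.stabilizer G v) :
    ∃ a : Function.End X, a ∈ gEnd G X ∧ Function.Bijective a ∧ a u = v ∧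
      (∀ x, x ∉ MulAction.orbit G u ∪ MulAction.orbit G v → a x = x) ∧
      (MulAction.orbit G u ≠ MulAction.orbit G v → a v = u) := by
  classical
  have hle : MulAction.stabilizer G u ≤ MulAction.stabilizer G v := le_of_eq hst
  have hge : MulAction.stabilizer G v ≤ MulAction.stabilizer G u := le_of_eq hst.symm
  by_cases hvu : v ∈ MulAction.orbit G u
  · have horb : MulAction.orbit G v = MulAction.orbit G u := orbit_eq_of_mem hvu
    refine ⟨omap G u v, omap_mem_gEnd hle, ?_, omap_apply_self hle, ?_, ?_⟩
    · refine Finite.injective_iff_bijective.mp ?_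
      intro x₁ x₂ hx
      by_cases h1 : x₁ ∈ MulAction.orbit G u <;> by_cases h2 : x₂ ∈ MulAction.orbit G u
      · obtain ⟨g₁, rfl⟩ := MulAction.mem_orbit_iff.mp h1
        obtain ⟨g₂, rfl⟩ := MulAction.mem_orbit_iff.mp h2
        rw [omap_apply_smul hle, omap_apply_smul hle] at hx
        exact omap_welldef hge hx
      · exfalso
        obtain ⟨g₁, rfl⟩ := MulAction.mem_orbit_iff.mp h1
        rw [omap_apply_smul hle, omap_apply_not_mem h2] at hx
        exact h2 (hx ▸ (horb ▸ MulAction.mem_orbit v g₁))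
      · exfalso
        obtain ⟨g₂, rfl⟩ := MulAction.mem_orbit_iff.mp h2
        rw [omap_apply_smul hle, omap_apply_not_mem h1] at hx
        exact h1 (hx ▸ (horb ▸ MulAction.mem_orbit v g₂))
      · rwa [omap_apply_not_mem h1, omap_apply_not_mem h2] at hx
    · intro x hx
      exact omap_apply_not_mem (fun hc => hx (Or.inl hc))
    · intro hne; exact absurd horb.symm hne
  · -- v not in orbit of u : swap construction
    set a : Function.End X :=
      fun x => if x ∈ MulAction.orbit G u then omap G u v x else omap G v u x with ha
    have horb : MulAction.orbit G u ≠ MulAction.orbit G v := by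
      intro h; exact hvu (h ▸ MulAction.mem_orbit_self v)
    have hdisj : ∀ x : X, x ∈ MulAction.orbit G u → x ∈ MulAction.orbit G v → False := by
      intro x h1 h2
      exact horb ((orbit_eq_of_mem h1).symm.trans (orbit_eq_of_mem h2))
    have hau : ∀ g : G, a (g • u) = g • v := by
      intro g
      rw [ha]; simp only
      rw [if_pos (MulAction.mem_orbit u g), omap_apply_smul hle]
    have hav : ∀ g : G, a (g • v) = g • u := by
      intro g
      have hgv : g • v ∉ MulAction.orbit G u := by
        intro hc
        exact hdisj _ hc (MulAction.mem_orbit v g)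
      rw [ha]; simp only
      rw [if_neg hgv, omap_apply_smul hge]
    have haid : ∀ x, x ∉ MulAction.orbit G u ∪ MulAction.orbit G v → a x = x := by
      intro x hx
      rw [Set.mem_union] at hx
      push_neg at hx
      rw [ha]; simp only
      rw [if_neg hx.1, omap_apply_not_mem hx.2]
    have hinv : Function.Involutive a := by
      intro x
      by_cases h1 : x ∈ MulAction.orbit G u
      · obtain ⟨g, rfl⟩ := MulAction.mem_orbit_iff.mp h1
        rw [hau, hav]
      · by_cases h2 : x ∈ MulAction.orbit G v
        · obtain ⟨g, rfl⟩ := MulAction.mem_orbit_iff.mp h2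
          rw [hav, hau]
        · rw [haid x (by rw [Set.mem_union]; tauto), haid x (by rw [Set.mem_union]; tauto)]
    have hmem : a ∈ gEnd G X := by
      intro g x
      by_cases h1 : x ∈ MulAction.orbit G u
      · obtain ⟨c, rfl⟩ := MulAction.mem_orbit_iff.mp h1
        rw [← mul_smul, hau, hau, mul_smul]
      · by_cases h2 : x ∈ MulAction.orbit G v
        · obtain ⟨c, rfl⟩ := MulAction.mem_orbit_iff.mp h2
          rw [← mul_smul, hav, hav, mul_smul]
        · have hx : x ∉ MulAction.orbit G u ∪ MulAction.orbit G v := by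
            rw [Set.mem_union]; tauto
          have hgx : g • x ∉ MulAction.orbit G u ∪ MulAction.orbit G v := by
            rw [Set.mem_union]
            push_neg
            exact ⟨fun hc => h1 ((smul_mem_orbit_iff' g).mp hc),
                   fun hc => h2 ((smul_mem_orbit_iff' g).mp hc)⟩
          rw [haid _ hgx, haid _ hx]
    refine ⟨a, hmem, hinv.bijective, ?_, haid, fun _ => ?_⟩
    · have := hau 1; simpa using this
    · have := hav 1; simpa using this

lemma exists_mover2 (u₁ u₂ v₁ v₂ : X)
    (h12 : MulAction.orbit G u₁ ≠ MulAction.orbit G u₂)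
    (h34 : MulAction.orbit G v₁ ≠ MulAction.orbit G v₂)
    (hs1 : MulAction.stabilizer G u₁ = MulAction.stabilizer G v₁)
    (hs2 : MulAction.stabilizer G u₂ = MulAction.stabilizer G v₂) :
    ∃ a : Function.End X, a ∈ gEnd G X ∧ Function.Bijective a ∧ a u₁ = v₁ ∧ a u₂ = v₂ := by
  obtain ⟨s₁, hm1, hb1, he1, hsup1, hswap1⟩ := exists_mover u₁ v₁ hs1
  have hst : MulAction.stabilizer G (s₁ u₂) = MulAction.stabilizer G v₂ :=
    (stab_apply_of_bij hm1 hb1 u₂).trans hs2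
  obtain ⟨s₂, hm2, hb2, he2, hsup2, _⟩ := exists_mover (s₁ u₂) v₂ hst
  refine ⟨s₂ * s₁, Submonoid.mul_mem _ hm2 hm1, hb2.comp hb1, ?_, ?_⟩
  · show s₂ (s₁ u₁) = v₁
    rw [he1]
    apply hsup2
    rw [Set.mem_union]
    push_neg
    constructor
    · intro hv
      have horb : MulAction.orbit G v₁ = MulAction.orbit G (s₁ u₂) := orbit_eq_of_mem hv
      by_cases hu2a : u₂ ∈ MulAction.orbit G u₁
      · exact h12 (orbit_eq_of_mem hu2a).symm
      · by_cases hu2b : u₂ ∈ MulAction.orbit G v₁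
        · have hne : MulAction.orbit G u₁ ≠ MulAction.orbit G v₁ := by
            intro h
            exact hu2a (h ▸ hu2b)
          obtain ⟨g, rfl⟩ := MulAction.mem_orbit_iff.mp hu2b
          have : s₁ (g • v₁) = g • u₁ := by rw [hm1 g v₁, hswap1 hne]
          rw [this] at horb
          rw [MulAction.orbit_smul] at horb
          exact hne horb.symm
        · have : s₁ u₂ = u₂ := hsup1 u₂ (by rw [Set.mem_union]; tauto)
          rw [this] at horb
          exact hu2b (by rw [horb]; exact MulAction.mem_orbit_self u₂)
    · intro hv
      exact h34 (orbit_eq_of_mem hv)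
  · show s₂ (s₁ u₂) = v₂
    exact he2

lemma mem_autSet_of {f : Function.End X} (hm : f ∈ gEnd G X) (hb : Function.Bijective f) :
    f ∈ autSet G X :=
  ⟨Equiv.ofBijective f hb, hm, rfl⟩

lemma inv_mem_autSet_of {f : Function.End X} (hm : f ∈ gEnd G X) (hb : Function.Bijective f) :
    ∃ fi : Function.End X, fi ∈ autSet G X ∧ (∀ x, fi (f x) = x) ∧ (∀ x, f (fi x) = x) := by
  set e : Equiv.Perm X := Equiv.ofBijective f hb with he
  have hme : e ∈ gAut G X := hm
  have hinv : e⁻¹ ∈ gAut G X := (gAut G X).inv_mem hme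
  refine ⟨(⇑(e⁻¹ : Equiv.Perm X) : X → X), ⟨e⁻¹, hinv, rfl⟩, fun x => ?_, fun x => ?_⟩
  · show e⁻¹ (e x) = x
    simp
  · show e (e⁻¹ x) = x
    simp

lemma sandwich {y q x₀ z : X} (n : G) (a ainv : Function.End X)
    (hmem : a ∈ gEnd G X)
    (hle1 : MulAction.stabilizer G y ≤ MulAction.stabilizer G q)
    (hle2 : MulAction.stabilizer G x₀ ≤ MulAction.stabilizer G z)
    (hay : a y = n • x₀) (haq : a q = n • z)
    (hinv1 : ∀ x, ainv (a x) = x) :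
    omap G y q = ainv * omap G x₀ z * a := by
  funext x
  show omap G y q x = ainv (omap G x₀ z (a x))
  by_cases h : x ∈ MulAction.orbit G y
  · obtain ⟨g, rfl⟩ := MulAction.mem_orbit_iff.mp h
    have e1 : a (g • y) = (g * n) • x₀ := by rw [hmem g y, hay, smul_smul]
    rw [omap_apply_smul hle1, e1, omap_apply_smul hle2]
    have e2 : (g * n) • z = a (g • q) := by rw [hmem g q, haq, smul_smul]
    rw [e2, hinv1]
  · have h2 : a x ∉ MulAction.orbit G x₀ := by
      intro hc
      obtain ⟨c, hc⟩ := MulAction.mem_orbit_iff.mp hc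
      have : a x = a ((c * n⁻¹) • y) := by
        rw [hmem (c * n⁻¹) y, hay, smul_smul, mul_assoc, inv_mul_cancel, mul_one, hc]
      have hx : x = (c * n⁻¹) • y := by
        have := congrArg ainv this
        rwa [hinv1, hinv1] at this
      exact h (hx ▸ MulAction.mem_orbit y (c * n⁻¹))
    rw [omap_apply_not_mem h, omap_apply_not_mem h2, hinv1]

lemma gen_main (W : Finset (Function.End X))
    (hW : ∀ y q : X, q ∉ MulAction.orbit G y →
      MulAction.stabilizer G y ≤ MulAction.stabilizer G q →
      omap G y q ∈ Submonoid.closure (↑W ∪ autSet G X)) :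
    ∀ f ∈ gEnd G X, f ∈ Submonoid.closure (↑W ∪ autSet G X) := by
  classical
  set S := Submonoid.closure (↑W ∪ autSet G X) with hS
  have hbij : ∀ f ∈ gEnd G X, Function.Bijective f → f ∈ S := fun f hf hb =>
    Submonoid.subset_closure (Or.inr (mem_autSet_of hf hb))
  have key : ∀ n : ℕ, ∀ f ∈ gEnd G X, Set.ncard {x | f x ≠ x} ≤ n → f ∈ S := by
    intro n
    induction n with
    | zero =>
      intro f hf hcard
      have hempty : {x | f x ≠ x} = ∅ := by
        rw [← Set.ncard_eq_zero (Set.toFinite _)]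
        omega
      have : f = 1 := by
        funext x
        by_contra hc
        exact absurd hempty (Set.nonempty_iff_ne_empty.mp ⟨x, hc⟩)
      rw [this]; exact Submonoid.one_mem S
    | succ n ih =>
      intro f hf hcard
      by_cases hb : Function.Bijective f
      · exact hbij f hf hb
      · have hnsurj : ¬ Function.Surjective f := by
          intro hs
          exact hb ((Finite.surjective_iff_bijective).mp hs)
        unfold Function.Surjective at hnsurj
        push_neg at hnsurj
        obtain ⟨y, hy⟩ := hnsurj
        have hyrange : ∀ w : X, f w ∉ MulAction.orbit G y := by
          intro w hw
          obtain ⟨g, hg⟩ := MulAction.mem_orbit_iff.mp hw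
          exact hy (g⁻¹ • w) (by rw [hf g⁻¹ w, ← hg, inv_smul_smul])
        have hle : MulAction.stabilizer G y ≤ MulAction.stabilizer G (f y) :=
          stab_le_stab_apply hf y
        set f' : Function.End X := fun x => if x ∈ MulAction.orbit G y then x else f x with hf'def
        have hf' : f' ∈ gEnd G X := by
          intro g x
          by_cases h : x ∈ MulAction.orbit G y
          · have h2 : g • x ∈ MulAction.orbit G y := (smul_mem_orbit_iff' g).mpr h
            show (if g • x ∈ MulAction.orbit G y then g • x else f (g • x)) =
              g • (if x ∈ MulAction.orbit G y then x else f x)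
            rw [if_pos h, if_pos h2]
          · have h2 : g • x ∉ MulAction.orbit G y := fun hc => h ((smul_mem_orbit_iff' g).mp hc)
            show (if g • x ∈ MulAction.orbit G y then g • x else f (g • x)) =
              g • (if x ∈ MulAction.orbit G y then x else f x)
            rw [if_neg h, if_neg h2, hf g x]
        have hfact : f = (omap G y (f y)) * f' := by
          funext x
          show f x = omap G y (f y) (f' x)
          by_cases h : x ∈ MulAction.orbit G y
          · have : f' x = x := by show (if _ then _ else _) = x; rw [if_pos h]
            rw [this]
            obtain ⟨g, rfl⟩ := MulAction.mem_orbit_iff.mp h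
            rw [omap_apply_smul hle, hf g y]
          · have : f' x = f x := by show (if _ then _ else _) = f x; rw [if_neg h]
            rw [this, omap_apply_not_mem (hyrange x)]
        have hsub : {x | f' x ≠ x} ⊂ {x | f x ≠ x} := by
          constructor
          · intro x hx
            simp only [Set.mem_setOf_eq] at hx ⊢
            by_cases h : x ∈ MulAction.orbit G y
            · exact absurd (by show (if _ then _ else _) = x; rw [if_pos h]) hx
            · have : f' x = f x := by show (if _ then _ else _) = f x; rw [if_neg h]
              rwa [this] at hx
          · intro hcon
            have hy1 : y ∈ {x | f x ≠ x} := by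
              simp only [Set.mem_setOf_eq]
              intro hc
              exact hyrange y (by rw [hc]; exact MulAction.mem_orbit_self y)
            have hy2 := hcon hy1
            simp only [Set.mem_setOf_eq] at hy2
            exact hy2 (by show (if _ then _ else _) = y; rw [if_pos (MulAction.mem_orbit_self y)])
        have hcard' : Set.ncard {x | f' x ≠ x} ≤ n := by
          have := Set.ncard_lt_ncard hsub (Set.toFinite _)
          omega
        have hqy : f y ∉ MulAction.orbit G y := hyrange y
        rw [hfact]
        exact Submonoid.mul_mem _ (hW y (f y) hqy hle) (ih f' hf' hcard')
  intro f hf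
  exact key (Set.ncard {x | f x ≠ x}) f hf le_rfl

omit [Finite X] in
lemma coe_conjSub (g : G) (K : Subgroup G) :
    (conjSub g K : Set G) = (fun x => g * x * g⁻¹) '' (K : Set G) := by
  rw [conjSub, Subgroup.coe_map]
  rfl

omit [Finite X] in
lemma eq_of_le_of_conj [Finite G] {H K : Subgroup G} (hle : H ≤ K) {g : G}
    (hc : K = conjSub g H) : K = H := by
  have h1 : (H : Set G) ⊆ (K : Set G) := hle
  have hinj : Function.Injective (fun x : G => g * x * g⁻¹) := by
    intro a b hab
    simpa using mul_left_cancel (mul_right_cancel hab)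
  have h2 : (K : Set G).ncard ≤ (H : Set G).ncard := by
    rw [hc, coe_conjSub, Set.ncard_image_of_injective _ hinj]
  have := Set.eq_of_subset_of_ncard_le h1 h2 (Set.toFinite _)
  exact (SetLike.coe_injective this).symm

end Infra

/-- `Rank(End_G(X) : Aut_G(X)) ≤ Σᵢ |U(Hᵢ)| − κ_G(X)`. -/
theorem stmt12 {G X : Type*} [Group G] [MulAction G X] [Finite G] [Finite X]
    (r : ℕ) (H : Fin r → Subgroup G)
    (hH1 : ∀ i, ∃ x : X, MulAction.stabilizer G x = H i)
    (hH2 : ∀ x : X, ∃! i, ∃ g : G, MulAction.stabilizer G x = conjSub g (H i))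
    :
    relRank (gEnd G X) (autSet G X) ≤
      (∑ i, (stabU G X (H i)).ncard) -
      Set.ncard {i : Fin r | (classOrbits G X (H i)).ncard = 1} := by
  classical
  haveI : Finite (Subgroup G) :=
    Finite.of_injective (fun K : Subgroup G => (K : Set G)) SetLike.coe_injective
  haveI : Finite (Function.End X) := by unfold Function.End; infer_instance
  set N : Fin r → Subgroup G := fun i => Subgroup.normalizer (H i : Set G) with hN
  choose x0 hx0 using hH1
  set zspec : ∀ (_ : Fin r) (_ : Set (Subgroup G)), X → Prop := fun i C z =>
    MulAction.stabilizer G (x0 i) ≤ MulAction.stabilizer G z ∧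
    z ∉ MulAction.orbit G (x0 i) ∧ nConjClass (N i) (MulAction.stabilizer G z) = C with hzspec
  set Valid : Fin r → Set (Set (Subgroup G)) := fun i =>
    {C | C ∈ stabU G X (H i) ∧
      ¬(C = nConjClass (N i) (H i) ∧ (classOrbits G X (H i)).ncard = 1)} with hValid
  -- orbit of x0 i is in classOrbits
  have hx0orb : ∀ i, MulAction.orbit G (x0 i) ∈ classOrbits G X (H i) := by
    intro i
    exact ⟨x0 i, ⟨1, by rw [hx0 i, conjSub_one]⟩, rfl⟩
  have hco_pos : ∀ i, 0 < (classOrbits G X (H i)).ncard := by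
    intro i
    rw [Set.ncard_pos (Set.toFinite _)]
    exact ⟨_, hx0orb i⟩
  -- existence of generator target points
  have hzex : ∀ i C, C ∈ Valid i → ∃ z, zspec i C z := by
    intro i C hC
    obtain ⟨hCU, hCV⟩ := hC
    obtain ⟨q, hq1, hq2⟩ := hCU
    by_cases hqo : q ∈ MulAction.orbit G (x0 i)
    · -- stabilizer of q equals H i; need a second orbit of the same type
      obtain ⟨g, hg⟩ := MulAction.mem_orbit_iff.mp hqo
      have hstabq : MulAction.stabilizer G q = H i := by
        have h1 : MulAction.stabilizer G q = conjSub g (H i) := by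
          rw [← hg, stab_smul, hx0 i]
        exact eq_of_le_of_conj hq1 h1
      have hC0 : C = nConjClass (N i) (H i) := by rw [hq2, hstabq]
      have hne1 : (classOrbits G X (H i)).ncard ≠ 1 := fun h => hCV ⟨hC0, h⟩
      have hlt : 1 < (classOrbits G X (H i)).ncard := by
        have := hco_pos i
        omega
      obtain ⟨s, hs, hsne⟩ := Set.exists_ne_of_one_lt_ncard hlt (MulAction.orbit G (x0 i))
      obtain ⟨y₂, ⟨g₂, hg₂⟩, rfl⟩ := hs
      refine ⟨g₂⁻¹ • y₂, ?_, ?_, ?_⟩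
      · rw [hx0 i, stab_smul, hg₂, conjSub_conjSub, inv_mul_cancel, conjSub_one]
      · intro hc
        exact hsne (MulAction.orbit_smul g₂⁻¹ y₂ ▸ orbit_eq_of_mem hc)
      · rw [stab_smul, hg₂, conjSub_conjSub, inv_mul_cancel, conjSub_one, ← hstabq, ← hq2]
    · exact ⟨q, by rw [hx0 i]; exact hq1, hqo, hq2.symm⟩
  set genFun : Fin r → Set (Subgroup G) → Function.End X := fun i C =>
    if h : ∃ z, zspec i C z then omap G (x0 i) (Classical.choose h) else 1 with hgenFun
  set Gens : Fin r → Set (Function.End X) := fun i => genFun i '' Valid i with hGens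
  set W : Finset (Function.End X) :=
    Finset.univ.biUnion (fun i => (Set.toFinite (Gens i)).toFinset) with hW
  set S := Submonoid.closure (↑W ∪ autSet G X) with hS
  -- every elementary map is in S
  have hWkey : ∀ y q : X, q ∉ MulAction.orbit G y →
      MulAction.stabilizer G y ≤ MulAction.stabilizer G q → omap G y q ∈ S := by
    intro y q hqo hle
    obtain ⟨i, ⟨c, hc⟩, _⟩ := hH2 y
    -- rebase so that the stabilizer of the base point is exactly H i
    set y₁ := c⁻¹ • y with hy₁
    set q₁ := c⁻¹ • q with hq₁
    have hsy1 : MulAction.stabilizer G y₁ = H i := by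
      rw [hy₁, stab_smul, hc, conjSub_conjSub, inv_mul_cancel, conjSub_one]
    have hle1 : MulAction.stabilizer G y₁ ≤ MulAction.stabilizer G q₁ := by
      rw [hy₁, hq₁, stab_smul, stab_smul]
      exact conjSub_le_conjSub _ hle
    have hq1 : q₁ ∉ MulAction.orbit G y₁ := by
      intro hcon
      rw [hy₁, MulAction.orbit_smul] at hcon
      exact hqo (by
        have := (smul_mem_orbit_iff' (y := y) c).mpr hcon
        rwa [hq₁, smul_inv_smul] at this)
    have hrebase : omap G y q = omap G y₁ q₁ := omap_rebase c⁻¹ hle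
    rw [hrebase]
    -- the class of the stabilizer of q₁
    set C := nConjClass (N i) (MulAction.stabilizer G q₁) with hCdef
    have hCU : C ∈ stabU G X (H i) := ⟨q₁, hsy1 ▸ hle1, rfl⟩
    have hCV : C ∈ Valid i := by
      refine ⟨hCU, ?_⟩
      rintro ⟨hC0, hκ⟩
      have hKmem : MulAction.stabilizer G q₁ ∈ C :=
        ⟨1, Subgroup.one_mem _, (conjSub_one _).symm⟩
      rw [hC0] at hKmem
      obtain ⟨n, hn, hKn⟩ := hKmem
      have hKH : MulAction.stabilizer G q₁ = H i := by
        rw [hKn, conjSub_eq_self_of_mem_normalizer hn]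
      have hm1 : MulAction.orbit G y₁ ∈ classOrbits G X (H i) :=
        ⟨y₁, ⟨1, by rw [hsy1, conjSub_one]⟩, rfl⟩
      have hm2 : MulAction.orbit G q₁ ∈ classOrbits G X (H i) :=
        ⟨q₁, ⟨1, by rw [hKH, conjSub_one]⟩, rfl⟩
      have hne : MulAction.orbit G q₁ ≠ MulAction.orbit G y₁ := by
        intro h
        exact hq1 (MulAction.orbit_eq_iff.mp h)
      have : 1 < (classOrbits G X (H i)).ncard :=
        (Set.one_lt_ncard_iff (Set.toFinite _)).mpr ⟨_, _, hm2, hm1, hne⟩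
      omega
    -- the generator
    have hex : ∃ z, zspec i C z := hzex i C hCV
    set z := Classical.choose hex with hzdef
    have hz : zspec i C z := Classical.choose_spec hex
    obtain ⟨hzle, hzo, hzC⟩ := hz
    have hgen : genFun i C = omap G (x0 i) z := by
      simp only [hgenFun]
      rw [dif_pos hex]
    have hgenW : genFun i C ∈ (W : Set (Function.End X)) := by
      rw [hW]
      simp only [Finset.coe_biUnion, Finset.coe_univ, Set.mem_iUnion,
        Set.Finite.coe_toFinset]
      exact ⟨i, Set.mem_univ i, ⟨C, hCV, rfl⟩⟩
    -- matching conjugator n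
    have hKmem : MulAction.stabilizer G q₁ ∈ C :=
      ⟨1, Subgroup.one_mem _, (conjSub_one _).symm⟩
    rw [← hzC] at hKmem
    obtain ⟨n, hn, hKn⟩ := hKmem
    -- the two-point mover
    have hs1 : MulAction.stabilizer G y₁ = MulAction.stabilizer G (n • x0 i) := by
      rw [hsy1, stab_smul n (x0 i), hx0 i, conjSub_eq_self_of_mem_normalizer hn]
    have hs2 : MulAction.stabilizer G q₁ = MulAction.stabilizer G (n • z) := by
      rw [stab_smul n z]
      exact hKn
    have ho1 : MulAction.orbit G y₁ ≠ MulAction.orbit G q₁ := by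
      intro h
      exact hq1 (MulAction.orbit_eq_iff.mp h.symm)
    have ho2 : MulAction.orbit G (n • x0 i) ≠ MulAction.orbit G (n • z) := by
      rw [MulAction.orbit_smul, MulAction.orbit_smul]
      intro h
      exact hzo (MulAction.orbit_eq_iff.mp h.symm)
    obtain ⟨a, hma, hba, ha1, ha2⟩ := exists_mover2 y₁ q₁ (n • x0 i) (n • z) ho1 ho2 hs1 hs2
    obtain ⟨ainv, hainvmem, hinv1, _⟩ := inv_mem_autSet_of hma hba
    have hsand : omap G y₁ q₁ = ainv * omap G (x0 i) z * a :=
      sandwich n a ainv hma hle1 hzle ha1 ha2 hinv1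
    rw [hsand, hS]
    refine Submonoid.mul_mem _ (Submonoid.mul_mem _ ?_ ?_) ?_
    · exact Submonoid.subset_closure (Or.inr hainvmem)
    · exact Submonoid.subset_closure (Or.inl (hgen ▸ hgenW))
    · exact Submonoid.subset_closure (Or.inr (mem_autSet_of hma hba))
  -- closure equality
  have hclosure : S = gEnd G X := by
    apply le_antisymm
    · rw [hS]
      apply Submonoid.closure_le.mpr
      rintro f (hf | hf)
      · rw [hW] at hf
        simp only [Finset.coe_biUnion, Finset.coe_univ, Set.mem_iUnion,
          Set.Finite.coe_toFinset] at hf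
        obtain ⟨i, _, hfi⟩ := hf
        rw [hGens] at hfi
        obtain ⟨C, _, rfl⟩ := hfi
        by_cases h : ∃ z, zspec i C z
        · have hg : genFun i C = omap G (x0 i) (Classical.choose h) := by
            simp only [hgenFun]
            rw [dif_pos h]
          rw [hg]
          exact omap_mem_gEnd (Classical.choose_spec h).1
        · have hg : genFun i C = 1 := by
            simp only [hgenFun]
            rw [dif_neg h]
          rw [hg]
          exact Submonoid.one_mem _
      · obtain ⟨e, he, rfl⟩ := hf
        exact he
    · intro f hf
      exact gen_main W hWkey f hf
  -- cardinality bound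
  have hcard : W.card + Set.ncard {i : Fin r | (classOrbits G X (H i)).ncard = 1} ≤
      ∑ i, (stabU G X (H i)).ncard := by
    have h1 : W.card ≤ ∑ i, (Set.toFinite (Gens i)).toFinset.card := Finset.card_biUnion_le
    have h2 : ∀ i, (Set.toFinite (Gens i)).toFinset.card = (Gens i).ncard := by
      intro i
      rw [Set.ncard_eq_toFinset_card _ (Set.toFinite (Gens i))]
    have h3 : ∀ i, (Gens i).ncard ≤ (Valid i).ncard := by
      intro i
      rw [hGens]
      exact Set.ncard_image_le (Set.toFinite _)
    have h4 : ∀ i, (Valid i).ncard + (if (classOrbits G X (H i)).ncard = 1 then 1 else 0) =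
        (stabU G X (H i)).ncard := by
      intro i
      have hC0mem : nConjClass (N i) (H i) ∈ stabU G X (H i) :=
        ⟨x0 i, (hx0 i).ge, by rw [hx0 i]⟩
      by_cases hκ : (classOrbits G X (H i)).ncard = 1
      · rw [if_pos hκ]
        have hV : Valid i = stabU G X (H i) \ {nConjClass (N i) (H i)} := by
          ext C
          simp only [hValid, Set.mem_setOf_eq, Set.mem_diff, Set.mem_singleton_iff]
          constructor
          · rintro ⟨ha, hb⟩
            exact ⟨ha, fun h => hb ⟨h, hκ⟩⟩
          · rintro ⟨ha, hb⟩
            exact ⟨ha, fun h => hb h.1⟩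
        rw [hV, Set.ncard_diff_singleton_of_mem hC0mem]
        have hpos : 0 < (stabU G X (H i)).ncard :=
          (Set.ncard_pos (Set.toFinite _)).mpr ⟨_, hC0mem⟩
        omega
      · rw [if_neg hκ]
        have hV : Valid i = stabU G X (H i) := by
          ext C
          simp only [hValid, Set.mem_setOf_eq]
          exact ⟨fun h => h.1, fun h => ⟨h, fun hcon => hκ hcon.2⟩⟩
        rw [hV, Nat.add_zero]
    have h5 : Set.ncard {i : Fin r | (classOrbits G X (H i)).ncard = 1} =
        ∑ i, (if (classOrbits G X (H i)).ncard = 1 then 1 else 0) := by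
      rw [Set.ncard_eq_toFinset_card', Set.toFinset_setOf]
      rw [Finset.card_filter]
    have h6 : ∑ i, ((Valid i).ncard + (if (classOrbits G X (H i)).ncard = 1 then 1 else 0)) =
        ∑ i, (stabU G X (H i)).ncard := Finset.sum_congr rfl (fun i _ => h4 i)
    rw [Finset.sum_add_distrib] at h6
    have h7 : W.card ≤ ∑ i, (Valid i).ncard := by
      calc W.card ≤ ∑ i, (Set.toFinite (Gens i)).toFinset.card := h1
        _ = ∑ i, (Gens i).ncard := Finset.sum_congr rfl (fun i _ => h2 i)
        _ ≤ ∑ i, (Valid i).ncard := Finset.sum_le_sum (fun i _ => h3 i)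
    omega
  have hrel : relRank (gEnd G X) (autSet G X) ≤ W.card :=
    Nat.sInf_le ⟨W, rfl, hclosure⟩
  omega
end
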